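/- arXiv:2503.11526 — 2 statements merged into one kernel-verified Lean document; each statement's English description precedes it below -/
import Mathlib

section
/- Let v ∈ V, let F : V → ℝ, and assume w_j ≤ w_0 for all j ∈ V (so v ∈ win_v and win_v ≠ ∅). For each x ∈ win*_v set C_x = {x} ∪ {i ∈ win⁻_v | next_v(i) = x}, and suppose i'_x ∈ C_x minimizes the function i ↦ cost_F(x,i) over C_x (these values are well-defined: for i ∈ C_x with i ≠ x one has i ∈ win⁻_x and next_x(i) = x, while x ∈ win*_x). Then min_{x ∈ win*_v} cost_F(v, i'_x) = min_{i ∈ win_v} cost_F(v,i). -/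
open Finset
open scoped Classical

noncomputable section

variable {V : Type} [Fintype V] [PartialOrder V]

/-- The chain `T[v,i]` : all vertices `p` with `v ≤ p ≤ i`. -/
def chainCC (v i : V) : Finset V := univ.filter (fun p => v ≤ p ∧ p ≤ i)

/-- The chain `T[v,i)` : `T[v,i]` without `i`. -/
def chainCO (v i : V) : Finset V := (chainCC v i).erase i

/-- `p` is the parent of `j`. -/
def IsParent (p j : V) : Prop := p < j ∧ ¬ ∃ q, p < q ∧ q < j

/-- `u` is s-maximal in `T_v`. -/
def SMax (s : V → ℝ) (v u : V) : Prop := v ≤ u ∧ ∀ p ∈ chainCO v u, s p < s u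

/-- The window of `v`. -/
def win (w : V → ℝ) (w0 : ℝ) (v : V) : Finset V :=
  univ.filter (fun i => v ≤ i ∧ ∑ j ∈ chainCC v i, w j ≤ w0)

/-- `win*_v`: the s-maximal vertices of the window of `v`. -/
def winStar (w : V → ℝ) (w0 : ℝ) (s : V → ℝ) (v : V) : Finset V :=
  (win w w0 v).filter (fun i => SMax s v i)

/-- `win⁻_v = win_v \ win*_v`. -/
def winMinus (w : V → ℝ) (w0 : ℝ) (s : V → ℝ) (v : V) : Finset V :=
  win w w0 v \ winStar w w0 s v

/-- `next_v(u)`: the greatest (closest to `u`) s-maximal element of `T[v,u)`,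
if such a greatest element exists (junk value `v` otherwise). -/
def nxt (s : V → ℝ) (v u : V) : V :=
  if h : ∃ x ∈ chainCO v u, SMax s v x ∧ ∀ y ∈ chainCO v u, SMax s v y → y ≤ x
  then h.choose else v

/-- The vertices `j` outside `T[v,i]` whose parent lies in `T[v,i]`. -/
def branchOff (v i : V) : Finset V :=
  univ.filter (fun j => j ∉ chainCC v i ∧ ∃ p ∈ chainCC v i, IsParent p j)

/-- `sum_F(v,i) = Σ F(j)` over `j ∉ T[v,i]` whose parent lies in `T[v,i]`. -/
def sumF (F : V → ℝ) (v i : V) : ℝ := ∑ j ∈ branchOff v i, F j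

/-- `cost_F(v,i)`: `sum_F(v,i) + s_i` if `i ∈ win*_v`, and
`sum_F(v,i) + s_{next_v(i)}` otherwise (in particular for `i ∈ win⁻_v`). -/
def costF (w : V → ℝ) (w0 : ℝ) (s : V → ℝ) (F : V → ℝ) (v i : V) : ℝ :=
  if i ∈ winStar w w0 s v then sumF F v i + s i else sumF F v i + s (nxt s v i)

end

section helpers

variable {V : Type} [Fintype V] [PartialOrder V]

lemma mem_chainCC {v i p : V} : p ∈ chainCC v i ↔ v ≤ p ∧ p ≤ i := by
  simp [chainCC]

lemma mem_chainCO {v i p : V} : p ∈ chainCO v i ↔ v ≤ p ∧ p ≤ i ∧ p ≠ i := by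
  simp only [chainCO, Finset.mem_erase, mem_chainCC]; tauto

lemma chainCC_self (v : V) : chainCC v v = {v} := by
  ext p; simp [mem_chainCC, le_antisymm_iff, and_comm]

lemma chainCO_self (v : V) : chainCO v v = ∅ := by
  simp [chainCO, chainCC_self]

lemma smax_self (s : V → ℝ) (v : V) : SMax s v v :=
  ⟨le_rfl, by simp [chainCO_self]⟩

variable {w : V → ℝ} {w0 : ℝ} {s F : V → ℝ}

lemma mem_win {v i : V} : i ∈ win w w0 v ↔ v ≤ i ∧ ∑ j ∈ chainCC v i, w j ≤ w0 := by
  simp [win]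

lemma self_mem_win (hwin : ∀ j : V, w j ≤ w0) (v : V) : v ∈ win w w0 v := by
  rw [mem_win, chainCC_self]
  simpa using hwin v

lemma self_mem_winStar (hwin : ∀ j : V, w j ≤ w0) (v : V) : v ∈ winStar w w0 s v := by
  simp [winStar, self_mem_win hwin, smax_self]

lemma parent_unique (htree : ∀ a b c : V, a ≤ c → b ≤ c → a ≤ b ∨ b ≤ a)
    {p q j : V} (hp : IsParent p j) (hq : IsParent q j) : p = q := by
  rcases htree p q j hp.1.le hq.1.le with h | h
  · rcases lt_or_eq_of_le h with h | h
    · exact absurd ⟨q, h, hq.1⟩ hp.2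
    · exact h
  · rcases lt_or_eq_of_le h with h | h
    · exact absurd ⟨p, h, hp.1⟩ hq.2
    · exact h.symm

lemma nxt_spec (htree : ∀ a b c : V, a ≤ c → b ≤ c → a ≤ b ∨ b ≤ a)
    {v i : V} (hvi : v < i) :
    nxt s v i ∈ chainCO v i ∧ SMax s v (nxt s v i) ∧
      ∀ y ∈ chainCO v i, SMax s v y → y ≤ nxt s v i := by
  have hex : ∃ x ∈ chainCO v i, SMax s v x ∧ ∀ y ∈ chainCO v i, SMax s v y → y ≤ x := by
    set t := (chainCO v i).filter (fun x => SMax s v x) with ht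
    have hvt : v ∈ t := by
      simp [ht, mem_chainCO, hvi.le, hvi.ne, smax_self]
    obtain ⟨m, hm, hmax0⟩ := Finset.exists_maximal (s := t) ⟨v, hvt⟩
    have hmax : ∀ y ∈ t, ¬ m < y := fun y hy h => (not_le_of_gt h) (hmax0 hy h.le)
    have hm' := Finset.mem_filter.mp hm
    refine ⟨m, hm'.1, hm'.2, ?_⟩
    intro y hy hsy
    have hyt : y ∈ t := Finset.mem_filter.mpr ⟨hy, hsy⟩
    rcases htree y m i (mem_chainCO.mp hy).2.1 (mem_chainCO.mp hm'.1).2.1 with h | h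
    · exact h
    · rcases lt_or_eq_of_le h with h | h
      · exact absurd h (hmax y hyt)
      · exact h.ge
  rw [nxt, dif_pos hex]
  exact hex.choose_spec

lemma nxt_eq (htree : ∀ a b c : V, a ≤ c → b ≤ c → a ≤ b ∨ b ≤ a)
    {v i x : V} (hvi : v < i)
    (hx : x ∈ chainCO v i) (hsx : SMax s v x)
    (hgr : ∀ y ∈ chainCO v i, SMax s v y → y ≤ x) : nxt s v i = x := by
  obtain ⟨h1, h2, h3⟩ := nxt_spec (s := s) htree hvi
  exact le_antisymm (hgr _ h1 h2) (h3 x hx hsx)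

lemma smax_trans (htree : ∀ a b c : V, a ≤ c → b ≤ c → a ≤ b ∨ b ≤ a)
    {v x u : V} (h1 : SMax s v x) (hxu : x < u) (h2 : SMax s x u) : SMax s v u := by
  refine ⟨h1.1.trans hxu.le, fun p hp => ?_⟩
  obtain ⟨hvp, hpu, hpne⟩ := mem_chainCO.mp hp
  have hsxu : s x < s u := h2.2 x (mem_chainCO.mpr ⟨le_rfl, hxu.le, hxu.ne⟩)
  rcases htree p x u hpu hxu.le with h | h
  · rcases eq_or_lt_of_le h with rfl | h
    · exact hsxu
    · exact (h1.2 p (mem_chainCO.mpr ⟨hvp, h.le, h.ne⟩)).trans hsxu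
  · exact h2.2 p (mem_chainCO.mpr ⟨h, hpu, hpne⟩)

lemma sumF_decomp (htree : ∀ a b c : V, a ≤ c → b ≤ c → a ≤ b ∨ b ≤ a)
    (F : V → ℝ) {v x j : V} (hvx : v ≤ x) (hxj : x ≤ j) :
    sumF F v j =
      (∑ j' ∈ Finset.univ.filter
          (fun j' => ¬ j' ≤ x ∧ ∃ p ∈ chainCO v x, IsParent p j'), F j')
        + sumF F x j := by
  set A := Finset.univ.filter
      (fun j' => ¬ j' ≤ x ∧ ∃ p ∈ chainCO v x, IsParent p j') with hA
  have hdisj : Disjoint A (branchOff x j) := by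
    rw [Finset.disjoint_left]
    intro a ha hb
    obtain ⟨hax, p1, hp1, hpar1⟩ := (Finset.mem_filter.mp ha).2
    obtain ⟨-, p2, hp2, hpar2⟩ := (Finset.mem_filter.mp hb).2
    obtain ⟨hvp1, hp1x, hp1nx⟩ := mem_chainCO.mp hp1
    obtain ⟨hxp2, -⟩ := mem_chainCC.mp hp2
    have := parent_unique htree hpar1 hpar2
    subst this
    exact hp1nx (le_antisymm hp1x hxp2)
  have hun : branchOff v j = A ∪ branchOff x j := by
    ext j'
    simp only [branchOff, hA, Finset.mem_union, Finset.mem_filter, Finset.mem_univ,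
      true_and, mem_chainCC, mem_chainCO]
    constructor
    · rintro ⟨hnot, p, ⟨hvp, hpj⟩, hpar⟩
      have hvj' : v ≤ j' := hvp.trans hpar.1.le
      have hnj : ¬ j' ≤ j := fun h => hnot ⟨hvj', h⟩
      rcases htree p x j hpj hxj with h | h
      · rcases eq_or_lt_of_le h with rfl | h
        · exact Or.inr ⟨fun hc => hnj hc.2, p, ⟨le_rfl, hpj⟩, hpar⟩
        · refine Or.inl ⟨fun hjx => hnj (hjx.trans hxj), p, ⟨hvp, h.le, h.ne⟩, hpar⟩
      · exact Or.inr ⟨fun hc => hnj hc.2, p, ⟨h, hpj⟩, hpar⟩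
    · rintro (⟨hnx, p, ⟨hvp, hpx, hpnx⟩, hpar⟩ | ⟨hnot, p, ⟨hxp, hpj⟩, hpar⟩)
      · have hpltx : p < x := lt_of_le_of_ne hpx hpnx
        refine ⟨?_, p, ⟨hvp, hpx.trans hxj⟩, hpar⟩
        rintro ⟨-, hj'j⟩
        rcases htree j' x j hj'j hxj with h | h
        · exact hnx h
        · have hxlt : x < j' := lt_of_le_of_ne h (fun he => hnx he.ge)
          exact hpar.2 ⟨x, hpltx, hxlt⟩
      · have hxj' : x ≤ j' := hxp.trans hpar.1.le
        refine ⟨?_, p, ⟨hvx.trans hxp, hpj⟩, hpar⟩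
        rintro ⟨-, hj'j⟩
        exact hnot ⟨hxj', hj'j⟩
  rw [sumF, sumF, hun, Finset.sum_union hdisj]

/-- Key transfer lemma: for `x ∈ win*_v` and `j ∈ C_x`,
`cost_F(v,j) = K + cost_F(x,j)` where `K` depends only on `v, x`. -/
lemma cost_transfer (htree : ∀ a b c : V, a ≤ c → b ≤ c → a ≤ b ∨ b ≤ a)
    (hwin : ∀ j : V, w j ≤ w0) (F : V → ℝ) {v x j : V}
    (hx : x ∈ winStar w w0 s v)
    (hj : j ∈ insert x ((winMinus w w0 s v).filter (fun j => nxt s v j = x))) :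
    costF w w0 s F v j =
      (∑ j' ∈ Finset.univ.filter
          (fun j' => ¬ j' ≤ x ∧ ∃ p ∈ chainCO v x, IsParent p j'), F j')
        + costF w w0 s F x j := by
  obtain ⟨hxwin, hxsm⟩ := Finset.mem_filter.mp hx
  have hvx : v ≤ x := hxsm.1
  rcases Finset.mem_insert.mp hj with rfl | hj
  · -- j = x
    have hxx : j ∈ winStar w w0 s j :=
      Finset.mem_filter.mpr ⟨self_mem_win hwin j, smax_self s j⟩
    rw [costF, if_pos hx, costF, if_pos hxx, sumF_decomp htree F hvx le_rfl]
    ring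
  · obtain ⟨hjm, hnxt⟩ := Finset.mem_filter.mp hj
    obtain ⟨hjwin, hjns⟩ := Finset.mem_sdiff.mp hjm
    have hvj : v ≤ j := (mem_win.mp hjwin).1
    have hvltj : v < j := by
      rcases eq_or_lt_of_le hvj with rfl | h
      · exact absurd (self_mem_winStar hwin v) hjns
      · exact h
    obtain ⟨hnmem, hnsm, hngr⟩ := nxt_spec (s := s) htree hvltj
    rw [hnxt] at hnmem hnsm hngr
    obtain ⟨-, hxlej, hxnej⟩ := mem_chainCO.mp hnmem
    have hxltj : x < j := lt_of_le_of_ne hxlej hxnej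
    -- j is not s-maximal in T_x
    have hnsmx : ¬ SMax s x j := by
      intro hS
      exact hjns (Finset.mem_filter.mpr ⟨hjwin, smax_trans htree hxsm hxltj hS⟩)
    have hjnsx : j ∉ winStar w w0 s x := by
      intro h
      exact hnsmx (Finset.mem_filter.mp h).2
    -- nxt s x j = x
    have hnxtx : nxt s x j = x := by
      refine nxt_eq htree hxltj (mem_chainCO.mpr ⟨le_rfl, hxlej, hxnej⟩)
        (smax_self s x) ?_
      intro y hy hsy
      by_contra hyx
      obtain ⟨hxy, hyj, hynj⟩ := mem_chainCO.mp hy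
      have hxlty : x < y := lt_of_le_of_ne hxy (fun he => hyx he.ge)
      have hsvy : SMax s v y := smax_trans htree hxsm hxlty hsy
      have := hngr y (mem_chainCO.mpr ⟨hvx.trans hxy, hyj, hynj⟩) hsvy
      exact hyx this
    rw [costF, if_neg hjns, costF, if_neg hjnsx,
      hnxt, hnxtx, sumF_decomp htree F hvx hxlej]
    ring

end helpers

theorem stmt_4 (V : Type) [Fintype V] [Nonempty V] [PartialOrder V]
    (htree : ∀ a b c : V, a ≤ c → b ≤ c → a ≤ b ∨ b ≤ a)
    (w : V → ℝ) (s : V → ℝ) (w0 : ℝ)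
    (hw : ∀ i : V, 0 ≤ w i) (hw0 : 0 ≤ w0)
    (hwin : ∀ j : V, w j ≤ w0)
    (F : V → ℝ)
    (v : V) (i' : V → V)
    (hi' : ∀ x ∈ winStar w w0 s v,
      i' x ∈ insert x ((winMinus w w0 s v).filter (fun j => nxt s v j = x)) ∧
      ∀ j ∈ insert x ((winMinus w w0 s v).filter (fun j => nxt s v j = x)),
        costF w w0 s F x (i' x) ≤ costF w w0 s F x j) :
    sInf {c : ℝ | ∃ x ∈ winStar w w0 s v, c = costF w w0 s F v (i' x)}
      = sInf {c : ℝ | ∃ i ∈ win w w0 v, c = costF w w0 s F v i} := by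
  set S1 := {c : ℝ | ∃ x ∈ winStar w w0 s v, c = costF w w0 s F v (i' x)} with hS1
  set S2 := {c : ℝ | ∃ i ∈ win w w0 v, c = costF w w0 s F v i} with hS2
  have hS1eq : S1 = (fun x => costF w w0 s F v (i' x)) '' ↑(winStar w w0 s v) := by
    ext c; simp [hS1, eq_comm]
  have hS2eq : S2 = (fun i => costF w w0 s F v i) '' ↑(win w w0 v) := by
    ext c; simp [hS2, eq_comm]
  have hS1fin : S1.Finite := by
    rw [hS1eq]; exact (winStar w w0 s v).finite_toSet.image _
  have hS2fin : S2.Finite := by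
    rw [hS2eq]; exact (win w w0 v).finite_toSet.image _
  have hS1ne : S1.Nonempty := ⟨_, v, self_mem_winStar hwin v, rfl⟩
  have hS2ne : S2.Nonempty := ⟨_, v, self_mem_win hwin v, rfl⟩
  -- membership in C_x implies membership in win
  have hCmem : ∀ x ∈ winStar w w0 s v, ∀ j ∈ insert x
      ((winMinus w w0 s v).filter (fun j => nxt s v j = x)), j ∈ win w w0 v := by
    intro x hx j hj
    rcases Finset.mem_insert.mp hj with rfl | hj
    · exact (Finset.mem_filter.mp hx).1
    · exact (Finset.mem_sdiff.mp (Finset.mem_filter.mp hj).1).1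
  have hsub : S1 ⊆ S2 := by
    rintro c ⟨x, hx, rfl⟩
    exact ⟨i' x, hCmem x hx _ (hi' x hx).1, rfl⟩
  -- domination: every element of S2 is dominated by an element of S1
  have hdom : ∀ c ∈ S2, ∃ c' ∈ S1, c' ≤ c := by
    rintro c ⟨i, hi, rfl⟩
    by_cases hst : i ∈ winStar w w0 s v
    · refine ⟨costF w w0 s F v (i' i), ⟨i, hst, rfl⟩, ?_⟩
      have h1 := cost_transfer htree hwin F hst (hi' i hst).1
      have h2 := cost_transfer htree hwin F hst
        (Finset.mem_insert_self i _)
      have h3 := (hi' i hst).2 i (Finset.mem_insert_self i _)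
      rw [h1, h2]; linarith
    · have him : i ∈ winMinus w w0 s v := Finset.mem_sdiff.mpr ⟨hi, hst⟩
      have hvi : v ≤ i := (mem_win.mp hi).1
      have hvlti : v < i := by
        rcases eq_or_lt_of_le hvi with rfl | h
        · exact absurd (self_mem_winStar hwin v) hst
        · exact h
      obtain ⟨hnmem, hnsm, hngr⟩ := nxt_spec (s := s) htree hvlti
      set x := nxt s v i with hxdef
      obtain ⟨hvlex, hxlei, -⟩ := mem_chainCO.mp hnmem
      have hxwin : x ∈ win w w0 v := by
        rw [mem_win]
        refine ⟨hvlex, le_trans ?_ (mem_win.mp hi).2⟩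
        refine Finset.sum_le_sum_of_subset_of_nonneg ?_ (fun j _ _ => hw j)
        intro p hp
        obtain ⟨h1, h2⟩ := mem_chainCC.mp hp
        exact mem_chainCC.mpr ⟨h1, h2.trans hxlei⟩
      have hxstar : x ∈ winStar w w0 s v := Finset.mem_filter.mpr ⟨hxwin, hnsm⟩
      have hiC : i ∈ insert x ((winMinus w w0 s v).filter (fun j => nxt s v j = x)) :=
        Finset.mem_insert_of_mem (Finset.mem_filter.mpr ⟨him, rfl⟩)
      refine ⟨costF w w0 s F v (i' x), ⟨x, hxstar, rfl⟩, ?_⟩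
      have h1 := cost_transfer htree hwin F hxstar (hi' x hxstar).1
      have h2 := cost_transfer htree hwin F hxstar hiC
      have h3 := (hi' x hxstar).2 i hiC
      rw [h1, h2]; linarith
  apply le_antisymm
  · have hmem := hS2ne.csInf_mem hS2fin
    obtain ⟨c', hc', hle⟩ := hdom _ hmem
    exact (csInf_le hS1fin.bddBelow hc').trans hle
  · exact csInf_le_csInf hS2fin.bddBelow hS1ne hsub
end

section
/- Assume w_j ≤ w_0 for every j ∈ V. Then for every v ∈ V, OPT(v) = min over i ∈ win_v of ( max_{p ∈ T[v,i]} s_p + Σ_j OPT(j) ), where the inner sum ranges over all j ∈ V with j ∉ T[v,i] whose parent lies in T[v,i]. (The minimum is over a nonempty set since v ∈ win_v, and all OPT values exist.) -/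
open Finset
open scoped Classical

noncomputable section

variable {V : Type} [Fintype V] [PartialOrder V]

/-- A chain partition of the subtree `T_v`: a family of nonempty pairwise-disjoint
parts covering `T_v`, each part pairwise comparable, order-convex, and of total
weight at most `w0`. -/
def IsChainPartition (w : V → ℝ) (w0 : ℝ) (v : V) (P : Finset (Finset V)) : Prop :=
  (∀ C ∈ P, C.Nonempty) ∧
  (∀ C ∈ P, ∀ a ∈ C, v ≤ a) ∧
  (∀ u : V, v ≤ u → ∃! C, C ∈ P ∧ u ∈ C) ∧
  (∀ C ∈ P, ∀ a ∈ C, ∀ b ∈ C, a ≤ b ∨ b ≤ a) ∧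
  (∀ C ∈ P, ∀ a ∈ C, ∀ b ∈ C, ∀ p : V, a ≤ p → p ≤ b → p ∈ C) ∧
  (∀ C ∈ P, ∑ j ∈ C, w j ≤ w0)

/-- Total cost of a partition: the sum over parts `C` of `max_{j ∈ C} s_j`. -/
def totalCost (s : V → ℝ) (P : Finset (Finset V)) : ℝ :=
  ∑ C ∈ P, sSup (s '' (C : Set V))

/-- `OPT v`: the minimum total cost of a chain partition of `T_v`. -/
def OPT (w : V → ℝ) (w0 : ℝ) (s : V → ℝ) (v : V) : ℝ :=
  sInf {c : ℝ | ∃ P : Finset (Finset V), IsChainPartition w w0 v P ∧ c = totalCost s P}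

end

set_option linter.unusedSectionVars false

section Aux

variable {V : Type} [Fintype V] [PartialOrder V]

lemma coe_chainCC (v i : V) : (chainCC v i : Set V) = {p : V | v ≤ p ∧ p ≤ i} := by
  ext p; simp [mem_chainCC]

lemma mem_branchOff {v i j : V} :
    j ∈ branchOff v i ↔ j ∉ chainCC v i ∧ ∃ p ∈ chainCC v i, IsParent p j := by
  simp [branchOff]

/-- a finite nonempty chain has a minimum -/
lemma chain_min (A : Finset V) (hA : A.Nonempty)
    (htot : ∀ a ∈ A, ∀ b ∈ A, a ≤ b ∨ b ≤ a) : ∃ m ∈ A, ∀ a ∈ A, m ≤ a := by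
  obtain ⟨m, hm, hmin⟩ := A.exists_minimal hA
  refine ⟨m, hm, fun a ha => ?_⟩
  rcases htot m hm a ha with h | h
  · exact h
  · rcases eq_or_lt_of_le h with h' | h'
    · exact le_of_eq h'.symm
    · exact absurd (hmin ha h'.le) (not_le_of_gt h')

lemma chain_max (A : Finset V) (hA : A.Nonempty)
    (htot : ∀ a ∈ A, ∀ b ∈ A, a ≤ b ∨ b ≤ a) : ∃ m ∈ A, ∀ a ∈ A, a ≤ m := by
  obtain ⟨m, hm, hmax⟩ := A.exists_maximal hA
  refine ⟨m, hm, fun a ha => ?_⟩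
  rcases htot m hm a ha with h | h
  · rcases eq_or_lt_of_le h with h' | h'
    · exact le_of_eq h'.symm
    · exact absurd (hmax ha h'.le) (not_le_of_gt h')
  · exact h

variable (htree : ∀ a b c : V, a ≤ c → b ≤ c → a ≤ b ∨ b ≤ a)

lemma v_le_branch {v i j : V} (hj : j ∈ branchOff v i) : v ≤ j := by
  rw [mem_branchOff] at hj
  obtain ⟨-, p, hp, hpar⟩ := hj
  exact le_trans (mem_chainCC.1 hp).1 hpar.1.le

lemma branch_not_le {v i j : V} (hj : j ∈ branchOff v i) {u : V} (hu : u ∈ chainCC v i) :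
    ¬ j ≤ u := by
  intro h
  exact (mem_branchOff.1 hj).1 (mem_chainCC.2 ⟨v_le_branch hj, le_trans h (mem_chainCC.1 hu).2⟩)

include htree in
lemma branch_incomp {v i j j' : V} (hj : j ∈ branchOff v i) (hj' : j' ∈ branchOff v i)
    (h : j ≤ j') : j = j' := by
  by_contra hne
  have hlt : j < j' := lt_of_le_of_ne h hne
  obtain ⟨hj'nc, p', hp', hpar'⟩ := mem_branchOff.1 hj'
  rcases htree p' j j' hpar'.1.le hlt.le with hc | hc
  · -- p' ≤ j : since p' ≠ j (p' ∈ chain, j ∉), p' < j < j' contradicts parent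
    rcases eq_or_lt_of_le hc with he | hl
    · exact (mem_branchOff.1 hj).1 (he ▸ hp')
    · exact hpar'.2 ⟨j, hl, hlt⟩
  · -- j ≤ p' : then j ∈ chain, contradiction
    exact (mem_branchOff.1 hj).1
      (mem_chainCC.2 ⟨v_le_branch hj, le_trans hc (mem_chainCC.1 hp').2⟩)

include htree in
lemma exists_branch {v i u : V} (hvi : v ≤ i) (hvu : v ≤ u) (hu : u ∉ chainCC v i) :
    ∃ j ∈ branchOff v i, j ≤ u := by
  classical
  set A : Finset V := univ.filter (fun p => v ≤ p ∧ p ≤ u ∧ p ∉ chainCC v i) with hA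
  have hmemA : ∀ p, p ∈ A ↔ v ≤ p ∧ p ≤ u ∧ p ∉ chainCC v i := by intro p; simp [hA]
  have huA : u ∈ A := (hmemA u).2 ⟨hvu, le_refl u, hu⟩
  obtain ⟨j, hjA, hjmin⟩ := chain_min A ⟨u, huA⟩ (fun a ha b hb =>
    htree a b u ((hmemA a).1 ha).2.1 ((hmemA b).1 hb).2.1)
  obtain ⟨hvj, hju, hjnc⟩ := (hmemA j).1 hjA
  set B : Finset V := univ.filter (fun p => v ≤ p ∧ p < j) with hB
  have hmemB : ∀ p, p ∈ B ↔ v ≤ p ∧ p < j := by intro p; simp [hB]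
  have hvB : v ∈ B := by
    refine (hmemB v).2 ⟨le_refl v, lt_of_le_of_ne hvj ?_⟩
    rintro rfl
    exact hjnc (mem_chainCC.2 ⟨le_refl v, hvi⟩)
  obtain ⟨p, hpB, hpmax⟩ := chain_max B ⟨v, hvB⟩ (fun a ha b hb =>
    htree a b j ((hmemB a).1 ha).2.le ((hmemB b).1 hb).2.le)
  obtain ⟨hvp, hpj⟩ := (hmemB p).1 hpB
  have hpc : p ∈ chainCC v i := by
    by_contra hpc
    have : p ∈ A := (hmemA p).2 ⟨hvp, le_trans hpj.le hju, hpc⟩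
    exact absurd (hjmin p this) (not_le_of_gt hpj)
  refine ⟨j, mem_branchOff.2 ⟨hjnc, p, hpc, hpj, ?_⟩, hju⟩
  rintro ⟨q, hpq, hqj⟩
  have : q ∈ B := (hmemB q).2 ⟨le_trans hvp hpq.le, hqj⟩
  exact absurd (hpmax q this) (not_le_of_gt hpq)

end Aux

section OPTfacts

variable {V : Type} [Fintype V] [PartialOrder V]
variable (w s : V → ℝ) (w0 : ℝ)

def costSet (v : V) : Set ℝ :=
  {c : ℝ | ∃ P : Finset (Finset V), IsChainPartition w w0 v P ∧ c = totalCost s P}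

lemma OPT_eq (v : V) : OPT w w0 s v = sInf (costSet w s w0 v) := rfl

lemma costSet_finite (v : V) : (costSet w s w0 v).Finite := by
  apply Set.Finite.subset (Set.finite_range (fun P : Finset (Finset V) => totalCost s P))
  rintro c ⟨P, -, rfl⟩
  exact ⟨P, rfl⟩

lemma costSet_nonempty (hwin : ∀ j : V, w j ≤ w0) (v : V) : (costSet w s w0 v).Nonempty := by
  classical
  refine ⟨totalCost s ((univ.filter (v ≤ ·)).image (fun u => ({u} : Finset V))),
    (univ.filter (v ≤ ·)).image (fun u => ({u} : Finset V)), ?_, rfl⟩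
  refine ⟨?_, ?_, ?_, ?_, ?_, ?_⟩
  · rintro C hC
    obtain ⟨u, -, rfl⟩ := Finset.mem_image.1 hC
    exact ⟨u, Finset.mem_singleton_self u⟩
  · rintro C hC a ha
    obtain ⟨u, hu, rfl⟩ := Finset.mem_image.1 hC
    rw [Finset.mem_singleton] at ha
    subst ha
    simpa using hu
  · intro u hu
    refine ⟨{u}, ⟨Finset.mem_image.2 ⟨u, by simpa using hu, rfl⟩, Finset.mem_singleton_self u⟩, ?_⟩
    rintro C ⟨hC, huC⟩
    obtain ⟨u', -, rfl⟩ := Finset.mem_image.1 hC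
    rw [Finset.mem_singleton] at huC
    subst huC; rfl
  · rintro C hC a ha b hb
    obtain ⟨u, -, rfl⟩ := Finset.mem_image.1 hC
    rw [Finset.mem_singleton] at ha hb
    subst ha; subst hb; exact Or.inl le_rfl
  · rintro C hC a ha b hb p hap hpb
    obtain ⟨u, -, rfl⟩ := Finset.mem_image.1 hC
    rw [Finset.mem_singleton] at ha hb
    subst ha; subst hb
    exact Finset.mem_singleton.2 (le_antisymm hpb hap)
  · rintro C hC
    obtain ⟨u, -, rfl⟩ := Finset.mem_image.1 hC
    simpa using hwin u

lemma OPT_mem (hwin : ∀ j : V, w j ≤ w0) (v : V) :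
    ∃ P : Finset (Finset V), IsChainPartition w w0 v P ∧ OPT w w0 s v = totalCost s P :=
  (costSet_nonempty w s w0 hwin v).csInf_mem (costSet_finite w s w0 v)

lemma OPT_le (v : V) {c : ℝ} (hc : c ∈ costSet w s w0 v) : OPT w w0 s v ≤ c :=
  csInf_le (costSet_finite w s w0 v).bddBelow hc

end OPTfacts

section Main

variable {V : Type} [Fintype V] [PartialOrder V]
variable (htree : ∀ a b c : V, a ≤ c → b ≤ c → a ≤ b ∨ b ≤ a)
variable (w s : V → ℝ) (w0 : ℝ)

include htree in
lemma construct (hwin : ∀ j : V, w j ≤ w0) (v i : V) (hi : i ∈ win w w0 v) :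
    (sSup (s '' {p : V | v ≤ p ∧ p ≤ i}) + ∑ j ∈ branchOff v i, OPT w w0 s j)
      ∈ costSet w s w0 v := by
  classical
  have hi' : v ≤ i ∧ ∑ j ∈ chainCC v i, w j ≤ w0 := by
    simpa [win] using hi
  obtain ⟨hvi, hwt⟩ := hi'
  choose Q hQ hQc using fun j => OPT_mem w s w0 hwin j
  set B := branchOff v i with hB
  set P : Finset (Finset V) := insert (chainCC v i) (B.biUnion Q) with hP
  have hvc : v ∈ chainCC v i := mem_chainCC.2 ⟨le_rfl, hvi⟩
  have hQge : ∀ j, ∀ C ∈ Q j, ∀ a ∈ C, j ≤ a := fun j => (hQ j).2.1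
  have hQne : ∀ j, ∀ C ∈ Q j, C.Nonempty := fun j => (hQ j).1
  have hCCnot : chainCC v i ∉ B.biUnion Q := by
    intro h
    obtain ⟨j, hj, hCQ⟩ := Finset.mem_biUnion.1 h
    exact branch_not_le hj hvc (hQge j _ hCQ v hvc)
  have hmemP : ∀ C, C ∈ P ↔ C = chainCC v i ∨ ∃ j ∈ B, C ∈ Q j := by
    intro C; simp [hP, Finset.mem_insert, Finset.mem_biUnion]
  have hjj' : ∀ j ∈ B, ∀ j' ∈ B, ∀ C, C ∈ Q j → C ∈ Q j' → j = j' := by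
    intro j hj j' hj' C hCj hCj'
    obtain ⟨a, ha⟩ := hQne j C hCj
    have h1 := hQge j C hCj a ha
    have h2 := hQge j' C hCj' a ha
    rcases htree j j' a h1 h2 with h | h
    · exact branch_incomp htree hj hj' h
    · exact (branch_incomp htree hj' hj h).symm
  have hdisjQ : (B : Set V).PairwiseDisjoint Q := by
    intro j hj j' hj' hne
    refine Finset.disjoint_left.2 fun C hCj hCj' => ?_
    exact hne (hjj' j (by exact_mod_cast hj) j' (by exact_mod_cast hj') C hCj hCj')
  refine ⟨P, ⟨?_, ?_, ?_, ?_, ?_, ?_⟩, ?_⟩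
  · -- nonempty
    intro C hC
    rcases (hmemP C).1 hC with rfl | ⟨j, hj, hCQ⟩
    · exact ⟨v, hvc⟩
    · exact hQne j C hCQ
  · -- ≥ v
    intro C hC a ha
    rcases (hmemP C).1 hC with rfl | ⟨j, hj, hCQ⟩
    · exact (mem_chainCC.1 ha).1
    · exact le_trans (v_le_branch hj) (hQge j C hCQ a ha)
  · -- cover
    intro u hu
    by_cases huc : u ∈ chainCC v i
    · refine ⟨chainCC v i, ⟨(hmemP _).2 (Or.inl rfl), huc⟩, ?_⟩
      rintro C ⟨hC, huC⟩
      rcases (hmemP C).1 hC with rfl | ⟨j, hj, hCQ⟩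
      · rfl
      · exact absurd (hQge j C hCQ u huC) (branch_not_le hj huc)
    · obtain ⟨j, hj, hju⟩ := exists_branch htree hvi hu huc
      obtain ⟨C, ⟨hCQ, huC⟩, huniq⟩ := (hQ j).2.2.1 u hju
      refine ⟨C, ⟨(hmemP C).2 (Or.inr ⟨j, hj, hCQ⟩), huC⟩, ?_⟩
      rintro C' ⟨hC', huC'⟩
      rcases (hmemP C').1 hC' with rfl | ⟨j', hj', hC'Q⟩
      · exact absurd huC' huc
      · have hj'j : j' = j := by
          have h1 := hQge j' C' hC'Q u huC'
          rcases htree j' j u h1 hju with h | h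
          · exact branch_incomp htree hj' hj h
          · exact (branch_incomp htree hj hj' h).symm
        subst hj'j
        exact huniq C' ⟨hC'Q, huC'⟩
  · -- chain
    intro C hC a ha b hb
    rcases (hmemP C).1 hC with rfl | ⟨j, hj, hCQ⟩
    · exact htree a b i (mem_chainCC.1 ha).2 (mem_chainCC.1 hb).2
    · exact (hQ j).2.2.2.1 C hCQ a ha b hb
  · -- convex
    intro C hC a ha b hb p hap hpb
    rcases (hmemP C).1 hC with rfl | ⟨j, hj, hCQ⟩
    · exact mem_chainCC.2 ⟨le_trans (mem_chainCC.1 ha).1 hap,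
        le_trans hpb (mem_chainCC.1 hb).2⟩
    · exact (hQ j).2.2.2.2.1 C hCQ a ha b hb p hap hpb
  · -- weight
    intro C hC
    rcases (hmemP C).1 hC with rfl | ⟨j, hj, hCQ⟩
    · exact hwt
    · exact (hQ j).2.2.2.2.2 C hCQ
  · -- cost
    show _ = totalCost s P
    rw [totalCost, hP, Finset.sum_insert hCCnot, Finset.sum_biUnion hdisjQ, coe_chainCC]
    congr 1
    exact Finset.sum_congr rfl fun j _ => hQc j

include htree in
lemma ge_RHS (hwin : ∀ j : V, w j ≤ w0) (v : V) :
    ∃ i ∈ win w w0 v,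
      sSup (s '' {p : V | v ≤ p ∧ p ≤ i}) + ∑ j ∈ branchOff v i, OPT w w0 s j
        ≤ OPT w w0 s v := by
  classical
  obtain ⟨P, hPpart, hOPT⟩ := OPT_mem w s w0 hwin v
  obtain ⟨hPne, hPge, hPcov, hPch, hPcx, hPwt⟩ := hPpart
  obtain ⟨C₀, ⟨hC₀P, hvC₀⟩, huniq₀⟩ := hPcov v le_rfl
  obtain ⟨i, hiC₀, himax⟩ := chain_max C₀ ⟨v, hvC₀⟩ (hPch C₀ hC₀P)
  have hC₀eq : C₀ = chainCC v i := by
    ext p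
    constructor
    · intro hp; exact mem_chainCC.2 ⟨hPge C₀ hC₀P p hp, himax p hp⟩
    · intro hp
      exact hPcx C₀ hC₀P v hvC₀ i hiC₀ p (mem_chainCC.1 hp).1 (mem_chainCC.1 hp).2
  have hvi : v ≤ i := hPge C₀ hC₀P i hiC₀
  have hiwin : i ∈ win w w0 v := by
    rw [win, Finset.mem_filter]
    exact ⟨Finset.mem_univ i, hvi, by rw [← hC₀eq]; exact hPwt C₀ hC₀P⟩
  have hnotin : ∀ C ∈ P, C ≠ C₀ → ∀ a ∈ C, a ∉ chainCC v i := by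
    intro C hC hne a ha hac
    have haC₀ : a ∈ C₀ := hC₀eq ▸ hac
    obtain ⟨D, -, hDuniq⟩ := hPcov a (mem_chainCC.1 hac).1
    exact hne ((hDuniq C ⟨hC, ha⟩).trans (hDuniq C₀ ⟨hC₀P, haC₀⟩).symm)
  have hbr : ∀ C ∈ P, C ≠ C₀ → ∃ j ∈ branchOff v i, ∀ a ∈ C, j ≤ a := by
    intro C hC hne
    obtain ⟨m, hm, hmin⟩ := chain_min C (hPne C hC) (hPch C hC)
    obtain ⟨j, hj, hjm⟩ := exists_branch htree hvi (hPge C hC m hm) (hnotin C hC hne m hm)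
    exact ⟨j, hj, fun a ha => le_trans hjm (hmin a ha)⟩
  set Qd : V → Finset (Finset V) :=
    fun j => P.filter (fun C => C ≠ C₀ ∧ ∀ a ∈ C, j ≤ a) with hQd
  have hQdmem : ∀ j C, C ∈ Qd j ↔ C ∈ P ∧ C ≠ C₀ ∧ ∀ a ∈ C, j ≤ a := by
    intro j C; simp [hQd]
  have hQdpart : ∀ j ∈ branchOff v i, IsChainPartition w w0 j (Qd j) := by
    intro j hj
    refine ⟨?_, ?_, ?_, ?_, ?_, ?_⟩
    · intro C hC; exact hPne C ((hQdmem j C).1 hC).1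
    · intro C hC; exact ((hQdmem j C).1 hC).2.2
    · intro u hju
      have hvu : v ≤ u := le_trans (v_le_branch hj) hju
      obtain ⟨C, ⟨hC, huC⟩, hCuniq⟩ := hPcov u hvu
      have hCne : C ≠ C₀ := by
        rintro rfl
        exact branch_not_le hj (hC₀eq ▸ huC) hju
      obtain ⟨j', hj', hj'le⟩ := hbr C hC hCne
      have hj'j : j' = j := by
        rcases htree j' j u (hj'le u huC) hju with h | h
        · exact branch_incomp htree hj' hj h
        · exact (branch_incomp htree hj hj' h).symm
      refine ⟨C, ⟨(hQdmem j C).2 ⟨hC, hCne, hj'j ▸ hj'le⟩, huC⟩, ?_⟩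
      rintro C' ⟨hC', huC'⟩
      exact hCuniq C' ⟨((hQdmem j C').1 hC').1, huC'⟩
    · intro C hC; exact hPch C ((hQdmem j C).1 hC).1
    · intro C hC; exact hPcx C ((hQdmem j C).1 hC).1
    · intro C hC; exact hPwt C ((hQdmem j C).1 hC).1
  have herase : P.erase C₀ = (branchOff v i).biUnion Qd := by
    ext C
    simp only [Finset.mem_erase, Finset.mem_biUnion]
    constructor
    · rintro ⟨hne, hC⟩
      obtain ⟨j, hj, hjle⟩ := hbr C hC hne
      exact ⟨j, hj, (hQdmem j C).2 ⟨hC, hne, hjle⟩⟩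
    · rintro ⟨j, hj, hC⟩
      exact ⟨((hQdmem j C).1 hC).2.1, ((hQdmem j C).1 hC).1⟩
  have hQdisj : ((branchOff v i : Finset V) : Set V).PairwiseDisjoint Qd := by
    intro j hj j' hj' hne
    refine Finset.disjoint_left.2 fun C hCj hCj' => ?_
    obtain ⟨a, ha⟩ := hPne C ((hQdmem j C).1 hCj).1
    have h1 := ((hQdmem j C).1 hCj).2.2 a ha
    have h2 := ((hQdmem j' C).1 hCj').2.2 a ha
    apply hne
    rcases htree j j' a h1 h2 with h | h
    · exact branch_incomp htree (by exact_mod_cast hj) (by exact_mod_cast hj') h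
    · exact (branch_incomp htree (by exact_mod_cast hj') (by exact_mod_cast hj) h).symm
  refine ⟨i, hiwin, ?_⟩
  rw [hOPT, totalCost, ← Finset.add_sum_erase P _ hC₀P, herase, Finset.sum_biUnion hQdisj]
  apply add_le_add
  · apply le_of_eq
    rw [hC₀eq, coe_chainCC]
  · apply Finset.sum_le_sum
    intro j hj
    exact OPT_le w s w0 j ⟨Qd j, hQdpart j hj, rfl⟩

end Main

theorem stmt_12 (V : Type) [Fintype V] [Nonempty V] [PartialOrder V]
    (htree : ∀ a b c : V, a ≤ c → b ≤ c → a ≤ b ∨ b ≤ a)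
    (w : V → ℝ) (s : V → ℝ) (w0 : ℝ)
    (hw : ∀ i : V, 0 ≤ w i) (hw0 : 0 ≤ w0)
    (hwin : ∀ j : V, w j ≤ w0)
    (v : V) :
    IsLeast {c : ℝ | ∃ i ∈ win w w0 v,
        c = sSup (s '' {p : V | v ≤ p ∧ p ≤ i}) + ∑ j ∈ branchOff v i, OPT w w0 s j}
      (OPT w w0 s v) := by
  constructor
  · obtain ⟨i, hi, hge⟩ := ge_RHS htree w s w0 hwin v
    exact ⟨i, hi, le_antisymm (OPT_le w s w0 v (construct htree w s w0 hwin v i hi)) hge⟩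
  · rintro c ⟨i, hi, rfl⟩
    exact OPT_le w s w0 v (construct htree w s w0 hwin v i hi)
end
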